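/- Suppose problem (P) admits two solutions z₁, z₂ for the same c, with z₁(u) < z₂(u) for all u ∈ (0,1). Then a contradiction follows; hence any two solutions of (P) for the same c coincide provided they never intersect in (0,1). In particular, combined with uniqueness of the ODE through a point, problem (P) has at most one solution for each c ∈ ℝ. -/

import Mathlib

open Set Filter Topology Real

/-- Two solutions of the doubly singular problem (P) for the same speed `c`
cannot satisfy `z₁ < z₂` everywhere on `(0,1)`; in particular (P) has at most
one solution among pairs that never intersect. -/
theorem stmt_3 (α c : ℝ) (hα : 0 < α) (f g h : ℝ → ℝ)
    (hf : ContinuousOn f (Icc 0 1)) (hg : ContinuousOn g (Icc 0 1))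
    (hh : ContinuousOn h (Icc 0 1))
    (hh0 : h 0 = 0) (hh1 : h 1 = 0) (hhpos : ∀ u ∈ Ioo (0:ℝ) 1, 0 < h u)
    (z₁ z₂ : ℝ → ℝ)
    (hz₁ : ∀ u ∈ Ioo (0:ℝ) 1, HasDerivAt z₁ (c * g u - f u - h u / z₁ u ^ α) u)
    (hz₁pos : ∀ u ∈ Ioo (0:ℝ) 1, 0 < z₁ u)
    (hz₁0 : Tendsto z₁ (𝓝[>] (0:ℝ)) (𝓝 0)) (hz₁1 : Tendsto z₁ (𝓝[<] (1:ℝ)) (𝓝 0))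
    (hz₂ : ∀ u ∈ Ioo (0:ℝ) 1, HasDerivAt z₂ (c * g u - f u - h u / z₂ u ^ α) u)
    (hz₂pos : ∀ u ∈ Ioo (0:ℝ) 1, 0 < z₂ u)
    (hz₂0 : Tendsto z₂ (𝓝[>] (0:ℝ)) (𝓝 0)) (hz₂1 : Tendsto z₂ (𝓝[<] (1:ℝ)) (𝓝 0))
    (hlt : ∀ u ∈ Ioo (0:ℝ) 1, z₁ u < z₂ u) :
    False := by
  set w : ℝ → ℝ := fun u => z₂ u - z₁ u with hw
  -- derivative of w is positive on (0,1)
  have hderiv : ∀ u ∈ Ioo (0:ℝ) 1,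
      HasDerivAt w (h u / z₁ u ^ α - h u / z₂ u ^ α) u := by
    intro u hu
    have := (hz₂ u hu).sub (hz₁ u hu)
    refine this.congr_deriv ?_
    ring
  have hpos : ∀ u ∈ Ioo (0:ℝ) 1, 0 < h u / z₁ u ^ α - h u / z₂ u ^ α := by
    intro u hu
    have h1 := hz₁pos u hu
    have h2 := hz₂pos u hu
    have hlt' := hlt u hu
    have hrp : z₁ u ^ α < z₂ u ^ α := Real.rpow_lt_rpow h1.le hlt' hα
    have hp1 : (0:ℝ) < z₁ u ^ α := Real.rpow_pos_of_pos h1 α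
    have : h u / z₂ u ^ α < h u / z₁ u ^ α :=
      div_lt_div_of_pos_left (hhpos u hu) hp1 hrp
    linarith
  -- w is strictly monotone on (0,1)
  have hmono : StrictMonoOn w (Ioo 0 1) := by
    apply strictMonoOn_of_deriv_pos (convex_Ioo 0 1)
    · intro u hu
      exact (hderiv u hu).differentiableAt.continuousAt.continuousWithinAt
    · intro u hu
      rw [interior_Ioo] at hu
      rw [(hderiv u hu).deriv]
      exact hpos u hu
  -- w tends to 0 at 1⁻
  have hw1 : Tendsto w (𝓝[<] (1:ℝ)) (𝓝 0) := by
    have := hz₂1.sub hz₁1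
    simpa using this
  -- w (1/2) ≤ 0 since w is increasing past 1/2 and tends to 0
  have hhalf : (1/2 : ℝ) ∈ Ioo (0:ℝ) 1 := by norm_num
  have hle : w (1/2) ≤ 0 := by
    apply ge_of_tendsto hw1
    filter_upwards [Ioo_mem_nhdsLT_of_mem (by norm_num : (1:ℝ) ∈ Ioc (1/2 : ℝ) 1)]
      with v hv
    exact (hmono hhalf ⟨by linarith [hv.1], hv.2⟩ hv.1).le
  have : 0 < w (1/2) := sub_pos.mpr (hlt _ hhalf)
  linarith
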